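/- arXiv:0906.1055 — 5 statements merged into one kernel-verified Lean document; each statement's English description precedes it below -/
import Mathlib

section
/- Let π(·; J, δ) be the probability measure on Θ with density proportional to (U(θ)+δ)^J with respect to Lebesgue measure. Then for all α ∈ (0,1], ε ∈ [0,1], J ≥ 1 and δ > 0: π(Θ(ε,α); J, δ) ≥ 1 / ( 1 + [(1+δ)/(ε+1+δ)]^J · [ (1/α)·(1+δ)/(ε+δ) − 1 ] · (1+δ)/δ ). -/
open MeasureTheory Real
open scoped ENNReal

private lemma lint_le_const {X : Type*} [MeasurableSpace X] (μ : Measure X) (s : Set X)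
    {f : X → ℝ≥0∞} (hf : Measurable f) {c : ℝ≥0∞} (h : ∀ x ∈ s, f x ≤ c) :
    ∫⁻ x in s, f x ∂μ ≤ c * μ s := by
  have h1 : ∫⁻ x in s, f x ∂μ ≤ ∫⁻ _ in s, c ∂μ := by
    refine lintegral_mono_ae ?_
    rw [ae_iff]
    have hE : MeasurableSet {x | ¬ f x ≤ c} := by
      have : {x | ¬ f x ≤ c} = f ⁻¹' (Set.Ioi c) := by ext x; simp [not_le]
      rw [this]; exact hf measurableSet_Ioi
    rw [Measure.restrict_apply hE]
    have : {x | ¬ f x ≤ c} ∩ s = ∅ :=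
      Set.eq_empty_of_forall_notMem fun x hx => hx.1 (h x hx.2)
    rw [this]; exact measure_empty
  calc ∫⁻ x in s, f x ∂μ ≤ ∫⁻ _ in s, c ∂μ := h1
    _ = c * μ s := setLIntegral_const s c

private lemma lint_ge_const {X : Type*} [MeasurableSpace X] (μ : Measure X) (s : Set X)
    {f : X → ℝ≥0∞} (hf : Measurable f) {c : ℝ≥0∞} (h : ∀ x ∈ s, c ≤ f x) :
    c * μ s ≤ ∫⁻ x in s, f x ∂μ := by
  have h1 : ∫⁻ _ in s, c ∂μ ≤ ∫⁻ x in s, f x ∂μ := by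
    refine lintegral_mono_ae ?_
    rw [ae_iff]
    have hE : MeasurableSet {x | ¬ c ≤ f x} := by
      have : {x | ¬ c ≤ f x} = f ⁻¹' (Set.Iio c) := by ext x; simp [not_le]
      rw [this]; exact hf measurableSet_Iio
    rw [Measure.restrict_apply hE]
    have : {x | ¬ c ≤ f x} ∩ s = ∅ :=
      Set.eq_empty_of_forall_notMem fun x hx => hx.1 (h x hx.2)
    rw [this]; exact measure_empty
  calc c * μ s = ∫⁻ _ in s, c ∂μ := (setLIntegral_const s c).symm
    _ ≤ ∫⁻ x in s, f x ∂μ := h1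

set_option maxHeartbeats 1600000 in
theorem measure_of_domain_optimizers_bound
    (n : ℕ) (Θ : Set (EuclideanSpace ℝ (Fin n)))
    (hΘpos : 0 < volume Θ) (hΘfin : volume Θ < ⊤)
    (U : EuclideanSpace ℝ (Fin n) → ℝ) (hUmeas : Measurable U)
    (hU01 : ∀ θ ∈ Θ, U θ ∈ Set.Icc (0 : ℝ) 1)
    (J δ ε α : ℝ) (hJ : 1 ≤ J) (hδ : 0 < δ)
    (hα : α ∈ Set.Ioc (0 : ℝ) 1) (hε : ε ∈ Set.Icc (0 : ℝ) 1) :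
    (∫ θ in {θ ∈ Θ | volume {θ' ∈ Θ | U θ' > U θ + ε} ≤ ENNReal.ofReal α * volume Θ},
        (U θ + δ) ^ J ∂volume) / (∫ θ in Θ, (U θ + δ) ^ J ∂volume) ≥
      1 / (1 + ((1 + δ) / (ε + 1 + δ)) ^ J *
        ((1 / α) * ((1 + δ) / (ε + δ)) - 1) * ((1 + δ) / δ)) := by
  obtain ⟨hα0, hα1⟩ := hα
  obtain ⟨hε0, hε1⟩ := hε
  have hJ0 : (0:ℝ) ≤ J := by linarith
  set A : Set (EuclideanSpace ℝ (Fin n)) :=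
    {θ ∈ Θ | volume {θ' ∈ Θ | U θ' > U θ + ε} ≤ ENNReal.ofReal α * volume Θ} with hAdef
  set K : ℝ := ((1 + δ) / (ε + 1 + δ)) ^ J *
      ((1 / α) * ((1 + δ) / (ε + δ)) - 1) * ((1 + δ) / δ) with hKdef
  -- basic positivity facts about K
  have hεδ : (0:ℝ) < ε + δ := by linarith
  have hQ' : (1:ℝ) ≤ (1 + δ) / (ε + δ) := by
    rw [le_div_iff₀ hεδ]; linarith
  have hinvα : (1:ℝ) ≤ 1 / α := by
    rw [le_div_iff₀ hα0]; linarith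
  have hmid : (0:ℝ) ≤ (1 / α) * ((1 + δ) / (ε + δ)) - 1 := by nlinarith
  have hK0 : 0 ≤ K := by
    rw [hKdef]
    have h1 : (0:ℝ) ≤ ((1 + δ) / (ε + 1 + δ)) ^ J := by positivity
    have h2 : (0:ℝ) ≤ (1 + δ) / δ := by positivity
    positivity
  have hK1 : (0:ℝ) < 1 + K := by linarith
  -- measurability of the integrand
  have hfmeas : Measurable fun θ => (U θ + δ) ^ J :=
    (Real.continuous_rpow_const hJ0).measurable.comp (hUmeas.add_const δ)
  set g : EuclideanSpace ℝ (Fin n) → ℝ≥0∞ := fun θ => ENNReal.ofReal ((U θ + δ) ^ J)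
    with hgdef
  have hgmeas : Measurable g := hfmeas.ennreal_ofReal
  -- Bochner integral = toReal of lintegral on subsets of Θ
  have hBoch : ∀ s : Set (EuclideanSpace ℝ (Fin n)), s ⊆ Θ →
      (∫ θ in s, (U θ + δ) ^ J ∂volume) = (∫⁻ θ in s, g θ ∂volume).toReal := by
    intro s hs
    rw [integral_eq_lintegral_of_nonneg_ae]
    · show ∀ᵐ θ ∂(volume.restrict s), (0:ℝ) ≤ (U θ + δ) ^ J
      rw [ae_iff]
      have hE : MeasurableSet {x | U x + δ < 0} := by
        have : {x | U x + δ < 0} = (fun x => U x + δ) ⁻¹' (Set.Iio 0) := rfl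
        rw [this]; exact (hUmeas.add_const δ) measurableSet_Iio
      refine measure_mono_null ?_ (show volume.restrict s {x | U x + δ < 0} = 0 from ?_)
      · intro x hx
        simp only [Set.mem_setOf_eq, not_le] at hx ⊢
        by_contra hc
        push_neg at hc
        exact absurd (Real.rpow_nonneg hc J) (not_le.mpr hx)
      · rw [Measure.restrict_apply hE]
        have : {x | U x + δ < 0} ∩ s = ∅ := by
          refine Set.eq_empty_of_forall_notMem fun x hx => ?_
          have := (hU01 x (hs hx.2)).1
          have := hx.1
          simp only [Set.mem_setOf_eq] at this
          linarith
        rw [this]; exact measure_empty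
    · exact hfmeas.aestronglyMeasurable.restrict
  -- total lintegral
  set t : ℝ≥0∞ := ∫⁻ θ in Θ, g θ ∂volume with htdef
  have ht_lb : ENNReal.ofReal (δ ^ J) * volume Θ ≤ t := by
    refine lint_ge_const volume Θ hgmeas fun x hx => ?_
    refine ENNReal.ofReal_le_ofReal ?_
    exact Real.rpow_le_rpow (le_of_lt hδ) (by linarith [(hU01 x hx).1]) hJ0
  have ht_ub : t ≤ ENNReal.ofReal ((1 + δ) ^ J) * volume Θ := by
    refine lint_le_const volume Θ hgmeas fun x hx => ?_
    refine ENNReal.ofReal_le_ofReal ?_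
    exact Real.rpow_le_rpow (by linarith [(hU01 x hx).1]) (by linarith [(hU01 x hx).2]) hJ0
  have htfin : t ≠ ∞ := by
    refine ne_top_of_le_ne_top ?_ ht_ub
    exact ENNReal.mul_ne_top ENNReal.ofReal_ne_top hΘfin.ne
  have htpos : 0 < t := by
    refine lt_of_lt_of_le ?_ ht_lb
    refine ENNReal.mul_pos ?_ hΘpos.ne'
    simp only [ne_eq, ENNReal.ofReal_eq_zero, not_le]
    exact Real.rpow_pos_of_pos hδ J
  have ht'pos : 0 < t.toReal := ENNReal.toReal_pos htpos.ne' htfin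
  -- the "trivial" case where A = Θ
  have trivial_case : A = Θ → (∫ θ in A, (U θ + δ) ^ J ∂volume) /
      (∫ θ in Θ, (U θ + δ) ^ J ∂volume) ≥ 1 / (1 + K) := by
    intro hAΘ
    rw [hAΘ, div_self (by rw [hBoch Θ subset_rfl]; exact ht'pos.ne')]
    rw [ge_iff_le, div_le_one hK1]
    linarith
  rcases eq_or_lt_of_le hα1 with hα1' | hα1'
  · -- α = 1 : A = Θ
    refine trivial_case ?_
    apply Set.Subset.antisymm (fun x hx => hx.1)
    intro θ hθ
    refine ⟨hθ, ?_⟩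
    rw [hα1', ENNReal.ofReal_one, one_mul]
    exact measure_mono fun x hx => hx.1
  -- now α < 1
  have hαM : ENNReal.ofReal α * volume Θ < volume Θ := by
    conv_rhs => rw [← one_mul (volume Θ)]
    exact ENNReal.mul_left_strictMono hΘpos.ne' hΘfin.ne
      (by rwa [ENNReal.ofReal_lt_one]) |>.trans_le le_rfl
  set S : Set ℝ := {y | volume {θ' ∈ Θ | U θ' > y} ≤ ENNReal.ofReal α * volume Θ} with hSdef
  have hmono : ∀ y y' : ℝ, y ≤ y' →
      volume {θ' ∈ Θ | U θ' > y'} ≤ volume {θ' ∈ Θ | U θ' > y} :=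
    fun y y' h => measure_mono fun x hx => ⟨hx.1, lt_of_le_of_lt h hx.2⟩
  have hS1 : (1:ℝ) ∈ S := by
    have : {θ' ∈ Θ | U θ' > 1} = ∅ := by
      refine Set.eq_empty_of_forall_notMem fun x hx => ?_
      exact absurd hx.2 (not_lt.mpr (hU01 x hx.1).2)
    simp only [hSdef, Set.mem_setOf_eq, this, measure_empty]
    exact zero_le'
  have hSlb : ∀ y ∈ S, (0:ℝ) ≤ y := by
    intro y hy
    by_contra hc
    push_neg at hc
    have : {θ' ∈ Θ | U θ' > y} = Θ := by
      apply Set.Subset.antisymm (fun x hx => hx.1)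
      exact fun x hx => ⟨hx, lt_of_lt_of_le hc (hU01 x hx).1⟩
    rw [hSdef] at hy
    simp only [Set.mem_setOf_eq, this] at hy
    exact absurd hy (not_le.mpr hαM)
  have hSne : S.Nonempty := ⟨1, hS1⟩
  have hSbdd : BddBelow S := ⟨0, hSlb⟩
  set y₀ : ℝ := sInf S with hy₀def
  have hy₀0 : 0 ≤ y₀ := le_csInf hSne hSlb
  have hy₀1 : y₀ ≤ 1 := csInf_le hSbdd hS1
  -- y₀ ∈ S
  have hy₀S : y₀ ∈ S := by
    have hUnion : {θ' ∈ Θ | U θ' > y₀} = ⋃ m : ℕ, {θ' ∈ Θ | U θ' > y₀ + 1 / (m + 1)} := by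
      ext x
      simp only [Set.mem_setOf_eq, Set.mem_iUnion]
      constructor
      · rintro ⟨hxΘ, hxU⟩
        obtain ⟨m, hm⟩ := exists_nat_one_div_lt (show (0:ℝ) < U x - y₀ by linarith)
        exact ⟨m, hxΘ, by push_cast; push_cast at hm; linarith⟩
      · rintro ⟨m, hxΘ, hxU⟩
        have : (0:ℝ) < 1 / (m + 1) := by positivity
        exact ⟨hxΘ, by linarith⟩
    have hmonoset : Monotone fun m : ℕ => {θ' ∈ Θ | U θ' > y₀ + 1 / (m + 1)} := by
      intro m m' hmm x hx
      refine ⟨hx.1, lt_of_le_of_lt ?_ hx.2⟩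
      have h1 : (m:ℝ) + 1 ≤ (m':ℝ) + 1 := by exact_mod_cast by omega
      have h2 : (0:ℝ) < (m:ℝ) + 1 := by positivity
      exact add_le_add_right (one_div_le_one_div_of_le h2 h1) y₀
    rw [hSdef, Set.mem_setOf_eq, hUnion, hmonoset.measure_iUnion]
    refine iSup_le fun m => ?_
    have h1 : y₀ < y₀ + 1 / (m + 1) := by
      have : (0:ℝ) < 1 / ((m:ℝ) + 1) := by positivity
      linarith
    obtain ⟨z, hzS, hz⟩ := exists_lt_of_csInf_lt hSne h1
    exact le_trans (hmono z _ hz.le) hzS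
  have hSIci : S = Set.Ici y₀ := by
    apply Set.Subset.antisymm (fun y hy => csInf_le hSbdd hy)
    intro y hy
    rw [hSdef, Set.mem_setOf_eq]
    exact le_trans (hmono y₀ y hy) hy₀S
  -- characterization of A
  have hA : A = Θ ∩ {θ | y₀ - ε ≤ U θ} := by
    rw [hAdef]
    ext θ
    simp only [Set.mem_setOf_eq, Set.mem_inter_iff]
    constructor
    · rintro ⟨hθΘ, hθ⟩
      have : U θ + ε ∈ S := hθ
      rw [hSIci] at this
      exact ⟨hθΘ, by simp only [Set.mem_Ici] at this; linarith⟩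
    · rintro ⟨hθΘ, hθ⟩
      refine ⟨hθΘ, ?_⟩
      have : U θ + ε ∈ S := by
        rw [hSIci]; simp only [Set.mem_Ici]; linarith
      exact this
  rcases lt_or_ge y₀ ε with hy₀ε | hy₀ε
  · -- y₀ < ε : A = Θ
    refine trivial_case ?_
    rw [hA]
    apply Set.Subset.antisymm Set.inter_subset_left
    intro θ hθ
    exact ⟨hθ, by simp only [Set.mem_setOf_eq]; linarith [(hU01 θ hθ).1]⟩
  -- main case : ε ≤ y₀
  set c : ℝ := (y₀ - ε + δ) ^ J with hcdef
  set d : ℝ := (y₀ + δ) ^ J with hddef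
  have hbase_c : (0:ℝ) < y₀ - ε + δ := by linarith
  have hbase_d : (0:ℝ) < y₀ + δ := by linarith
  have hc0 : 0 < c := Real.rpow_pos_of_pos hbase_c J
  have hd0 : 0 < d := Real.rpow_pos_of_pos hbase_d J
  set G : Set (EuclideanSpace ℝ (Fin n)) := Θ ∩ {θ | y₀ ≤ U θ} with hGdef
  set B : Set (EuclideanSpace ℝ (Fin n)) := Θ \ {θ | y₀ - ε ≤ U θ} with hBdef
  have hEmeas : MeasurableSet {θ | y₀ - ε ≤ U θ} := hUmeas measurableSet_Ici
  have hGA : G ⊆ A := by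
    rw [hA]
    refine fun x hx => ⟨hx.1, ?_⟩
    have h2 : y₀ ≤ U x := hx.2
    simp only [Set.mem_setOf_eq]
    linarith
  have hAΘ : A ⊆ Θ := by rw [hA]; exact Set.inter_subset_left
  have hABM : volume A + volume B = volume Θ := by
    rw [hA, hBdef]
    exact measure_inter_add_diff Θ hEmeas
  -- lower bound on volume G
  have hGM : ENNReal.ofReal α * volume Θ ≤ volume G := by
    set Θ' : Set (EuclideanSpace ℝ (Fin n)) := toMeasurable volume Θ with hΘ'def
    have hΘ'meas : MeasurableSet Θ' := measurableSet_toMeasurable volume Θ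
    have hswap : ∀ E : Set (EuclideanSpace ℝ (Fin n)), MeasurableSet E →
        volume (Θ' ∩ E) = volume (Θ ∩ E) :=
      fun E hE => Measure.measure_toMeasurable_inter hE hΘfin.ne
    have hGmeas : volume G = volume (Θ' ∩ {θ | y₀ ≤ U θ}) := by
      rw [hGdef]
      exact (hswap {θ | y₀ ≤ U θ} (hUmeas measurableSet_Ici)).symm
    have hInter : Θ' ∩ {θ | y₀ ≤ U θ} = ⋂ m : ℕ, Θ' ∩ {θ | y₀ - 1 / (m + 1) < U θ} := by
      ext x
      simp only [Set.mem_inter_iff, Set.mem_setOf_eq, Set.mem_iInter]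
      constructor
      · rintro ⟨hxΘ, hxU⟩
        intro m
        have : (0:ℝ) < 1 / ((m:ℝ) + 1) := by positivity
        exact ⟨hxΘ, by linarith⟩
      · intro hx
        refine ⟨(hx 0).1, ?_⟩
        by_contra hc
        push_neg at hc
        obtain ⟨m, hm⟩ := exists_nat_one_div_lt (show (0:ℝ) < y₀ - U x by linarith)
        have h2 := (hx m).2
        linarith
    have hanti : Antitone fun m : ℕ => Θ' ∩ {θ | y₀ - 1 / (m + 1) < U θ} := by
      intro m m' hmm x hx
      simp only [Set.mem_inter_iff, Set.mem_setOf_eq] at hx ⊢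
      refine ⟨hx.1, lt_of_le_of_lt ?_ hx.2⟩
      have h1 : (m:ℝ) + 1 ≤ (m':ℝ) + 1 := by exact_mod_cast by omega
      have h2 : (0:ℝ) < (m:ℝ) + 1 := by positivity
      have := one_div_le_one_div_of_le h2 h1
      linarith
    have hmeasm : ∀ m : ℕ, NullMeasurableSet (Θ' ∩ {θ | y₀ - 1 / (m + 1) < U θ}) volume :=
      fun m => (hΘ'meas.inter (hUmeas measurableSet_Ioi)).nullMeasurableSet
    have hfinm : ∃ m : ℕ, volume (Θ' ∩ {θ | y₀ - 1 / (m + 1) < U θ}) ≠ ∞ := by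
      refine ⟨0, ne_top_of_le_ne_top ?_ (measure_mono Set.inter_subset_left)⟩
      rw [hΘ'def, measure_toMeasurable]
      exact hΘfin.ne
    rw [hGmeas, hInter, hanti.measure_iInter hmeasm hfinm]
    refine le_iInf fun m => ?_
    have h1 : y₀ - 1 / (m + 1) ∉ S := by
      intro hmem
      have := csInf_le hSbdd hmem
      have h2 : (0:ℝ) < 1 / ((m:ℝ) + 1) := by positivity
      rw [← hy₀def] at this
      linarith
    have h2 : ¬ volume {θ' ∈ Θ | U θ' > y₀ - 1 / (m + 1)} ≤ ENNReal.ofReal α * volume Θ := h1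
    have h3 : volume (Θ' ∩ {θ | y₀ - 1 / (m + 1) < U θ})
        = volume {θ' ∈ Θ | U θ' > y₀ - 1 / (m + 1)} := by
      refine (hswap {θ | y₀ - 1 / (m + 1) < U θ} (hUmeas measurableSet_Ioi)).trans ?_
      rfl
    rw [h3]
    exact (not_le.mp h2).le
  -- lintegral bounds
  set a : ℝ≥0∞ := ∫⁻ θ in A, g θ ∂volume with hadef
  set b : ℝ≥0∞ := ∫⁻ θ in B, g θ ∂volume with hbdef
  have ha_lb : ENNReal.ofReal d * volume G ≤ a := by
    refine le_trans (lint_ge_const volume G hgmeas fun x hx => ?_)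
      (lintegral_mono' (Measure.restrict_mono hGA le_rfl) le_rfl)
    refine ENNReal.ofReal_le_ofReal ?_
    have hx2 : y₀ ≤ U x := hx.2
    exact Real.rpow_le_rpow hbase_d.le (by linarith) hJ0
  have hb_ub : b ≤ ENNReal.ofReal c * volume B := by
    refine lint_le_const volume B hgmeas fun x hx => ?_
    refine ENNReal.ofReal_le_ofReal ?_
    have hx2 : U x < y₀ - ε := not_le.mp hx.2
    exact Real.rpow_le_rpow (by linarith [(hU01 x hx.1).1]) (by linarith) hJ0
  have htab : t ≤ a + b := by
    have hcover : Θ ⊆ A ∪ B := by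
      intro x hx
      rw [hA, hBdef]
      by_cases h : y₀ - ε ≤ U x
      · exact Or.inl ⟨hx, h⟩
      · exact Or.inr ⟨hx, h⟩
    calc t ≤ ∫⁻ θ in A ∪ B, g θ ∂volume :=
          lintegral_mono' (Measure.restrict_mono hcover le_rfl) le_rfl
      _ ≤ ∫⁻ θ, g θ ∂(volume.restrict A + volume.restrict B) :=
          lintegral_mono' (Measure.restrict_union_le A B) le_rfl
      _ = a + b := lintegral_add_measure g _ _
  have hafin : a ≠ ∞ :=
    ne_top_of_le_ne_top htfin (lintegral_mono' (Measure.restrict_mono hAΘ le_rfl) le_rfl)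
  have hbfin : b ≠ ∞ := by
    refine ne_top_of_le_ne_top ?_ hb_ub
    exact ENNReal.mul_ne_top ENNReal.ofReal_ne_top
      (ne_top_of_le_ne_top hΘfin.ne (measure_mono Set.diff_subset))
  -- real versions
  have hMfin : volume Θ ≠ ∞ := hΘfin.ne
  have hAfin : volume A ≠ ∞ := ne_top_of_le_ne_top hMfin (measure_mono hAΘ)
  have hBfin : volume B ≠ ∞ := ne_top_of_le_ne_top hMfin (measure_mono Set.diff_subset)
  have hGfin : volume G ≠ ∞ := ne_top_of_le_ne_top hMfin (measure_mono Set.inter_subset_left)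
  set M' : ℝ := (volume Θ).toReal with hM'def
  set MA : ℝ := (volume A).toReal with hMAdef
  set MB : ℝ := (volume B).toReal with hMBdef
  set MG : ℝ := (volume G).toReal with hMGdef
  have hM'0 : 0 < M' := ENNReal.toReal_pos hΘpos.ne' hMfin
  have hsum : MA + MB = M' := by
    rw [hMAdef, hMBdef, hM'def, ← ENNReal.toReal_add hAfin hBfin, hABM]
  have hGMr : α * M' ≤ MG := by
    have := ENNReal.toReal_mono hGfin hGM
    rwa [ENNReal.toReal_mul, ENNReal.toReal_ofReal hα0.le] at this
  have hGAr : MG ≤ MA := ENNReal.toReal_mono hAfin (measure_mono hGA)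
  have ha_lbr : d * MG ≤ a.toReal := by
    have := ENNReal.toReal_mono hafin ha_lb
    rwa [ENNReal.toReal_mul, ENNReal.toReal_ofReal hd0.le] at this
  have hb_ubr : b.toReal ≤ c * MB := by
    have h := ENNReal.toReal_mono
      (ENNReal.mul_ne_top ENNReal.ofReal_ne_top hBfin) hb_ub
    rwa [ENNReal.toReal_mul, ENNReal.toReal_ofReal hc0.le] at h
  have htabr : t.toReal ≤ a.toReal + b.toReal := by
    have := ENNReal.toReal_mono (by
      exact ENNReal.add_ne_top.mpr ⟨hafin, hbfin⟩) htab
    rwa [ENNReal.toReal_add hafin hbfin] at this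
  -- key arithmetic : c * (1 - α) ≤ K * d * α
  have hcd : c ≤ d * ((1 + δ) / (ε + 1 + δ)) ^ J := by
    have hb1 : (0:ℝ) < ε + 1 + δ := by linarith
    have hstep : y₀ - ε + δ ≤ (y₀ + δ) * ((1 + δ) / (ε + 1 + δ)) := by
      rw [← mul_div_assoc, le_div_iff₀ hb1]
      nlinarith
    calc c ≤ ((y₀ + δ) * ((1 + δ) / (ε + 1 + δ))) ^ J :=
          Real.rpow_le_rpow hbase_c.le hstep hJ0
      _ = d * ((1 + δ) / (ε + 1 + δ)) ^ J := by
          rw [Real.mul_rpow hbase_d.le (by positivity)]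
  have hKα : c * (1 - α) ≤ K * d * α := by
    have he1 : ((1 / α) * ((1 + δ) / (ε + δ)) - 1) * ((1 + δ) / δ) * α
        = ((1 + δ) / (ε + δ) - α) * ((1 + δ) / δ) := by
      field_simp
    have hR : (1:ℝ) ≤ (1 + δ) / δ := by rw [le_div_iff₀ hδ]; linarith
    have h2 : (1 - α : ℝ) ≤ ((1 / α) * ((1 + δ) / (ε + δ)) - 1) * ((1 + δ) / δ) * α := by
      rw [he1]
      nlinarith
    have hP0 : (0:ℝ) ≤ ((1 + δ) / (ε + 1 + δ)) ^ J := by positivity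
    calc c * (1 - α) ≤ (d * ((1 + δ) / (ε + 1 + δ)) ^ J) * (1 - α) :=
          mul_le_mul_of_nonneg_right hcd (by linarith)
      _ ≤ (d * ((1 + δ) / (ε + 1 + δ)) ^ J) *
          (((1 / α) * ((1 + δ) / (ε + δ)) - 1) * ((1 + δ) / δ) * α) :=
          mul_le_mul_of_nonneg_left h2 (by positivity)
      _ = K * d * α := by rw [hKdef]; ring
  -- b ≤ K * a
  have hMG0 : 0 < MG := lt_of_lt_of_le (by positivity) hGMr
  have hkey : b.toReal ≤ K * a.toReal := by
    have h1 : b.toReal ≤ c * (M' - MG) := by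
      refine le_trans hb_ubr (mul_le_mul_of_nonneg_left (by linarith) hc0.le)
    have h2 : c * (M' - MG) ≤ K * (d * MG) := by
      have hx : (c + K * d) * (α * M') ≤ (c + K * d) * MG :=
        mul_le_mul_of_nonneg_left hGMr (by nlinarith)
      nlinarith [mul_le_mul_of_nonneg_right hKα hM'0.le]
    have h3 : K * (d * MG) ≤ K * a.toReal :=
      mul_le_mul_of_nonneg_left ha_lbr hK0
    linarith
  -- conclude
  have ha'pos : 0 < a.toReal := lt_of_lt_of_le (mul_pos hd0 hMG0) ha_lbr
  rw [ge_iff_le, hBoch A hAΘ, hBoch Θ subset_rfl, ← hadef, ← htdef]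
  rw [div_le_div_iff₀ hK1 ht'pos]
  nlinarith [htabr, hkey]
end

section
/- Under the setting of the measure bound theorem, for any α ∈ (0,1], ε ∈ (0,1], δ > 0 and σ ∈ (0,1), if J ≥ ((1+ε+δ)/ε)·[ log(σ/(1−σ)) + log(1/α) + 2 log((1+δ)/δ) ], then π(Θ(ε,α); J, δ) ≥ σ. -/
open MeasureTheory Real

lemma aux_ae_restrict {α : Type*} [MeasurableSpace α] (μ : Measure α) {S E : Set α}
    {p : α → Prop} (hE : MeasurableSet E) (hSE : S ⊆ E) (h : ∀ x ∈ E, p x) :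
    ∀ᵐ x ∂μ.restrict S, p x := by
  rw [ae_iff]
  have h1 : {x | ¬ p x} ⊆ Eᶜ := fun x hx hxE => hx (h x hxE)
  refine measure_mono_null h1 ?_
  rw [Measure.restrict_apply hE.compl]
  have hempty : Eᶜ ∩ S = ∅ :=
    Set.eq_empty_of_forall_notMem fun x hx => hx.1 (hSE hx.2)
  rw [hempty, measure_empty]

set_option maxHeartbeats 1600000 in
theorem J_bound_gives_confidence
    (n : ℕ) (Θ : Set (EuclideanSpace ℝ (Fin n)))
    (hΘpos : 0 < volume Θ) (hΘfin : volume Θ < ⊤)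
    (U : EuclideanSpace ℝ (Fin n) → ℝ) (hUmeas : Measurable U)
    (hU01 : ∀ θ ∈ Θ, U θ ∈ Set.Icc (0 : ℝ) 1)
    (J δ ε α σ : ℝ) (hJ1 : 1 ≤ J) (hδ : 0 < δ)
    (hα : α ∈ Set.Ioc (0 : ℝ) 1) (hε : ε ∈ Set.Ioc (0 : ℝ) 1)
    (hσ : σ ∈ Set.Ioo (0 : ℝ) 1)
    (hJ : J ≥ ((1 + ε + δ) / ε) *
      (Real.log (σ / (1 - σ)) + Real.log (1 / α) + 2 * Real.log ((1 + δ) / δ))) :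
    (∫ θ in {θ ∈ Θ | volume {θ' ∈ Θ | U θ' > U θ + ε} ≤ ENNReal.ofReal α * volume Θ},
        (U θ + δ) ^ J ∂volume) / (∫ θ in Θ, (U θ + δ) ^ J ∂volume) ≥ σ := by
  obtain ⟨hα0, hα1⟩ := hα
  obtain ⟨hε0, hε1⟩ := hε
  obtain ⟨hσ0, hσ1⟩ := hσ
  have hJ0 : (0:ℝ) < J := lt_of_lt_of_le one_pos hJ1
  set μ := (volume : Measure (EuclideanSpace ℝ (Fin n))) with hμdef
  set m := μ Θ with hm
  set M := m.toReal with hMdef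
  have hMpos : 0 < M := ENNReal.toReal_pos hΘpos.ne' hΘfin.ne
  -- clamped integrand
  set g : EuclideanSpace ℝ (Fin n) → ℝ := fun θ => (max 0 (min (U θ) 1) + δ) ^ J with hgdef
  have hgmeas : Measurable g := by
    have h1 : Measurable fun θ => max 0 (min (U θ) 1) + δ :=
      (measurable_const.max (hUmeas.min measurable_const)).add measurable_const
    exact (Real.continuous_rpow_const hJ0.le).measurable.comp h1
  have hg_nonneg : ∀ x, 0 ≤ g x := by
    intro x
    apply Real.rpow_nonneg
    have : (0:ℝ) ≤ max 0 (min (U x) 1) := le_max_left _ _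
    linarith
  have hg_ub : ∀ x, g x ≤ (1+δ) ^ J := by
    intro x
    apply Real.rpow_le_rpow
    · have : (0:ℝ) ≤ max 0 (min (U x) 1) := le_max_left _ _
      linarith
    · have h1 : min (U x) 1 ≤ 1 := min_le_right _ _
      have : max 0 (min (U x) 1) ≤ 1 := max_le zero_le_one h1
      linarith
    · exact hJ0.le
  have hg_lb : ∀ x, δ ^ J ≤ g x := by
    intro x
    apply Real.rpow_le_rpow hδ.le _ hJ0.le
    have : (0:ℝ) ≤ max 0 (min (U x) 1) := le_max_left _ _
    linarith
  clear_value μ m M g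
  -- finiteness and integrability on subsets of Θ
  have hfinm : ∀ S : Set (EuclideanSpace ℝ (Fin n)), S ⊆ Θ → IsFiniteMeasure (μ.restrict S) := by
    intro S hS
    constructor
    rw [Measure.restrict_apply_univ]
    exact (measure_mono hS).trans_lt (hm ▸ hΘfin)
  have hint : ∀ S : Set (EuclideanSpace ℝ (Fin n)), S ⊆ Θ → Integrable g (μ.restrict S) := by
    intro S hS
    haveI := hfinm S hS
    refine ⟨hgmeas.aestronglyMeasurable, ?_⟩
    apply MeasureTheory.HasFiniteIntegral.of_bounded (C := (1+δ)^J)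
    filter_upwards with x
    rw [Real.norm_eq_abs, abs_of_nonneg (hg_nonneg x)]
    exact hg_ub x
  -- f = g on subsets of Θ
  have hfg : ∀ S : Set (EuclideanSpace ℝ (Fin n)), S ⊆ Θ →
      ∫ θ in S, (U θ + δ) ^ J ∂μ = ∫ θ in S, g θ ∂μ := by
    intro S hS
    refine integral_congr_ae (aux_ae_restrict μ (E := U ⁻¹' Set.Icc 0 1)
      (hUmeas measurableSet_Icc) (fun θ hθ => hU01 θ (hS hθ)) ?_)
    intro x hx
    have h0 : (0:ℝ) ≤ U x := hx.1
    have h1 : U x ≤ 1 := hx.2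
    simp only [hgdef]
    rw [min_eq_left h1, max_eq_right h0]
  -- critical level
  set Scrit : Set ℝ := {y | 0 ≤ y ∧ μ {θ' ∈ Θ | U θ' > y} ≤ ENNReal.ofReal α * m} with hScrit
  have h1S : (1:ℝ) ∈ Scrit := by
    constructor
    · norm_num
    · have hempty : {θ' ∈ Θ | U θ' > 1} = ∅ :=
        Set.eq_empty_of_forall_notMem fun θ hθ => absurd (hU01 θ hθ.1).2 (not_le.mpr hθ.2)
      rw [hempty, measure_empty]
      exact zero_le
  have hbdd : BddBelow Scrit := ⟨0, fun y hy => hy.1⟩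
  set y0 := sInf Scrit with hy0def
  have hy0_nonneg : 0 ≤ y0 := le_csInf ⟨1, h1S⟩ fun y hy => hy.1
  have hy0_le1 : y0 ≤ 1 := csInf_le hbdd h1S
  have hC1 : ∀ z : ℝ, y0 < z → μ {θ' ∈ Θ | U θ' > z} ≤ ENNReal.ofReal α * m := by
    intro z hz
    obtain ⟨y, hyS, hyz⟩ := exists_lt_of_csInf_lt ⟨1, h1S⟩ hz
    refine le_trans (measure_mono ?_) hyS.2
    intro θ hθ
    exact ⟨hθ.1, lt_trans hyz hθ.2⟩
  have hC2 : ∀ y : ℝ, y < y0 → ENNReal.ofReal α * m ≤ μ {θ' ∈ Θ | U θ' > y} := by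
    intro y hy
    by_cases h0 : 0 ≤ y
    · by_contra hcon
      push_neg at hcon
      exact absurd (csInf_le hbdd ⟨h0, hcon.le⟩) (not_le.mpr hy)
    · push_neg at h0
      have hall : {θ' ∈ Θ | U θ' > y} = Θ := by
        ext θ
        constructor
        · exact fun h => h.1
        · exact fun hθ => ⟨hθ, lt_of_lt_of_le h0 (hU01 θ hθ).1⟩
      rw [hall]
      calc ENNReal.ofReal α * m ≤ 1 * m := by
            gcongr
            exact ENNReal.ofReal_le_one.mpr hα1
        _ = m := one_mul m
        _ ≤ μ Θ := le_of_eq hm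
  clear_value Scrit y0
  set A := {θ ∈ Θ | μ {θ' ∈ Θ | U θ' > U θ + ε} ≤ ENNReal.ofReal α * m} with hAdef
  have hAΘ : A ⊆ Θ := fun θ hθ => hθ.1
  have hC3 : ∀ θ ∈ Θ, y0 < U θ + ε → θ ∈ A := fun θ hθ h => ⟨hθ, hC1 _ h⟩
  clear_value A
  by_cases hcase : y0 < ε
  · -- trivial case: A = Θ
    have hAeq : A = Θ := by
      apply Set.eq_of_subset_of_subset hAΘ
      intro θ hθ
      exact hC3 θ hθ (lt_of_lt_of_le hcase (by linarith [(hU01 θ hθ).1]))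
    have hpos : 0 < ∫ θ in Θ, (U θ + δ) ^ J ∂μ := by
      rw [hfg Θ subset_rfl]
      haveI := hfinm Θ subset_rfl
      have hc : ∫ _ in Θ, (δ ^ J) ∂μ ≤ ∫ θ in Θ, g θ ∂μ :=
        integral_mono (integrable_const _) (hint Θ subset_rfl) hg_lb
      rw [setIntegral_const] at hc
      have hδJ : 0 < δ ^ J := Real.rpow_pos_of_pos hδ J
      have : (0:ℝ) < M * (δ ^ J) := by positivity
      calc (0:ℝ) < M * (δ ^ J) := this
        _ = (μ Θ).toReal • (δ ^ J) := by rw [smul_eq_mul, ← hm, ← hMdef]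
        _ ≤ _ := hc
    rw [hAeq, div_self hpos.ne']
    exact hσ1.le
  · push_neg at hcase  -- ε ≤ y0
    set κ := ε^2 / (1 + ε + δ) with hκdef
    have hden : (0:ℝ) < 1 + ε + δ := by linarith
    have hκpos : 0 < κ := by positivity
    have hκlt : κ < ε := by
      rw [hκdef, div_lt_iff₀ hden]
      nlinarith
    set y := y0 - κ with hydef
    have hypos : 0 < y := by simp only [hydef]; linarith
    set cl := (y + δ) ^ J with hcldef
    set ch := (y0 - ε + δ) ^ J with hchdef
    have hbcl : (0:ℝ) < y + δ := by linarith
    have hbch : (0:ℝ) < y0 - ε + δ := by linarith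
    have hclpos : 0 < cl := Real.rpow_pos_of_pos hbcl J
    have hchpos : 0 < ch := Real.rpow_pos_of_pos hbch J
    set S0 := {θ' ∈ Θ | U θ' > y} with hS0def
    have hS0Θ : S0 ⊆ Θ := fun θ hθ => hθ.1
    have hS0A : S0 ⊆ A := by
      intro θ hθ
      exact hC3 θ hθ.1 (by have := hθ.2; simp only [hydef] at this; linarith)
    have hS0mem : ∀ θ ∈ S0, y < U θ := fun θ hθ => hθ.2
    -- measure of S0
    have hmS0 : ENNReal.ofReal α * m ≤ μ S0 := hC2 y (by simp only [hydef]; linarith)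
    clear_value κ y cl ch S0
    -- complement bound
    have hcompl : ∀ θ ∈ Θ \ A, U θ ≤ y0 - ε := by
      intro θ hθ
      by_contra hcon
      push_neg at hcon
      exact hθ.2 (hC3 θ hθ.1 (by linarith))
    -- integral notations
    haveI := hfinm A hAΘ
    haveI := hfinm Θ subset_rfl
    haveI := hfinm S0 hS0Θ
    haveI := hfinm (Θ \ A) Set.diff_subset
    set IA := ∫ θ in A, g θ ∂μ with hIAdef
    set IB := ∫ θ in Θ \ A, g θ ∂μ with hIBdef
    set IT := ∫ θ in Θ, g θ ∂μ with hITdef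
    -- IA lower bound
    have hIA_lb : cl * (α * M) ≤ IA := by
      have h1 : ∫ _ in S0, cl ∂μ ≤ ∫ θ in S0, g θ ∂μ := by
        refine integral_mono_ae (integrable_const _) (hint S0 hS0Θ) ?_
        refine aux_ae_restrict μ (E := U ⁻¹' Set.Ioi y) (hUmeas measurableSet_Ioi)
          (fun θ hθ => hS0mem θ hθ) ?_
        intro x hx
        have hxy : y < U x := hx
        simp only [hgdef, hcldef]
        apply Real.rpow_le_rpow hbcl.le _ hJ0.le
        have h2 : y ≤ min (U x) 1 := le_min hxy.le (by linarith [hy0_le1, hκpos])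
        have h3 : min (U x) 1 ≤ max 0 (min (U x) 1) := le_max_right _ _
        linarith
      rw [setIntegral_const, smul_eq_mul] at h1
      have h2 : ∫ θ in S0, g θ ∂μ ≤ IA :=
        integral_mono_measure (Measure.restrict_mono hS0A le_rfl)
          (Filter.Eventually.of_forall hg_nonneg) (hint A hAΘ)
      have h3 : α * M ≤ (μ S0).toReal := by
        rw [hMdef]
        have hfin : μ S0 ≠ ⊤ := ((measure_mono hS0Θ).trans_lt (hm ▸ hΘfin)).ne
        have h4 : (ENNReal.ofReal α * m).toReal ≤ (μ S0).toReal :=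
          ENNReal.toReal_mono hfin hmS0
        rwa [ENNReal.toReal_mul, ENNReal.toReal_ofReal hα0.le] at h4
      calc cl * (α * M) ≤ cl * (μ S0).toReal := by
            exact mul_le_mul_of_nonneg_left h3 hclpos.le
        _ = (μ S0).toReal * cl := mul_comm _ _
        _ ≤ ∫ θ in S0, g θ ∂μ := h1
        _ ≤ IA := h2
    -- IB upper bound
    have hIB_ub : IB ≤ ch * M := by
      have h1 : ∫ θ in Θ \ A, g θ ∂μ ≤ ∫ _ in Θ \ A, ch ∂μ := by
        refine integral_mono_ae (hint _ Set.diff_subset) (integrable_const _) ?_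
        refine aux_ae_restrict μ (E := U ⁻¹' Set.Iic (y0 - ε)) (hUmeas measurableSet_Iic)
          hcompl ?_
        intro x hx
        have hxle : U x ≤ y0 - ε := hx
        simp only [hgdef, hchdef]
        apply Real.rpow_le_rpow (by positivity) _ hJ0.le
        have h2 : min (U x) 1 ≤ y0 - ε := le_trans (min_le_left _ _) hxle
        have h3 : max 0 (min (U x) 1) ≤ y0 - ε := max_le (by linarith) h2
        linarith
      rw [setIntegral_const, smul_eq_mul] at h1
      have h3 : (μ (Θ \ A)).toReal ≤ M := by
        rw [hMdef, hm]
        exact ENNReal.toReal_mono (hm ▸ hΘfin).ne (measure_mono Set.diff_subset)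
      calc IB ≤ (μ (Θ \ A)).toReal * ch := h1
        _ ≤ M * ch := mul_le_mul_of_nonneg_right h3 hchpos.le
        _ = ch * M := mul_comm _ _
    -- subadditivity
    have hsub : IT ≤ IA + IB := by
      have hle : μ.restrict Θ ≤ μ.restrict A + μ.restrict (Θ \ A) := by
        refine le_trans (Measure.restrict_mono ?_ le_rfl) (Measure.restrict_union_le A (Θ \ A))
        intro x hx
        by_cases hxA : x ∈ A
        · exact Or.inl hxA
        · exact Or.inr ⟨hx, hxA⟩
      have hintsum : Integrable g (μ.restrict A + μ.restrict (Θ \ A)) :=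
        (hint A hAΘ).add_measure (hint _ Set.diff_subset)
      calc IT ≤ ∫ θ, g θ ∂(μ.restrict A + μ.restrict (Θ \ A)) :=
            integral_mono_measure hle (Filter.Eventually.of_forall hg_nonneg) hintsum
        _ = IA + IB := integral_add_measure (hint A hAΘ) (hint _ Set.diff_subset)
    have hIT_pos : 0 < IT := by
      have hc : ∫ _ in Θ, (δ ^ J) ∂μ ≤ IT :=
        integral_mono (integrable_const _) (hint Θ subset_rfl) hg_lb
      rw [setIntegral_const, smul_eq_mul] at hc
      have hδJ : 0 < δ ^ J := Real.rpow_pos_of_pos hδ J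
      have : (0:ℝ) < M * δ ^ J := by positivity
      calc (0:ℝ) < M * δ ^ J := this
        _ = (μ Θ).toReal * δ ^ J := by rw [← hm, ← hMdef]
        _ ≤ IT := hc
    clear_value IA IB IT
    -- key scalar inequality
    have hlogr : Real.log ((y0 - ε + δ) / (y + δ)) ≤ -(ε / (1 + ε + δ)) := by
      have h1 : Real.log ((y0 - ε + δ) / (y + δ)) ≤ (y0 - ε + δ) / (y + δ) - 1 :=
        Real.log_le_sub_one_of_pos (div_pos hbch hbcl)
      have h2 : (y0 - ε + δ) / (y + δ) - 1 = -((ε - κ) / (y + δ)) := by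
        field_simp
        simp only [hydef]
        ring
      have h3 : ε / (1 + ε + δ) ≤ (ε - κ) / (y + δ) := by
        rw [div_le_div_iff₀ hden hbcl]
        have hκ' : κ * (1 + ε + δ) = ε ^ 2 := by
          rw [hκdef]
          field_simp
        simp only [hydef]
        nlinarith [hy0_le1, hε0, hκpos]
      linarith
    have hT : 0 ≤ 2 * Real.log ((1 + δ) / δ) := by
      have : (1:ℝ) ≤ (1 + δ) / δ := by
        rw [le_div_iff₀ hδ]; linarith
      have := Real.log_nonneg this
      linarith
    set L := Real.log (σ / (1 - σ)) + Real.log (1 / α) with hLdef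
    clear_value L
    have hJL : L ≤ J * (ε / (1 + ε + δ)) := by
      by_cases hL : L ≤ 0
      · have : 0 < J * (ε / (1 + ε + δ)) := by positivity
        linarith
      · push_neg at hL
        have hc1 : ((1 + ε + δ) / ε) * L ≤ J := by
          refine le_trans ?_ hJ
          have hpos : 0 < (1 + ε + δ) / ε := by positivity
          nlinarith
        calc L = (((1 + ε + δ) / ε) * L) * (ε / (1 + ε + δ)) := by
              field_simp
          _ ≤ J * (ε / (1 + ε + δ)) := by
              apply mul_le_mul_of_nonneg_right hc1 (by positivity)
    have hrpow : ((y0 - ε + δ) / (y + δ)) ^ J ≤ (1 - σ) * α / σ := by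
      rw [Real.rpow_def_of_pos (div_pos hbch hbcl)]
      have hRHSpos : (0:ℝ) < (1 - σ) * α / σ := by
        have h1σ : (0:ℝ) < 1 - σ := by linarith
        positivity
      rw [← Real.exp_log hRHSpos]
      apply Real.exp_le_exp.mpr
      have hLlog : Real.log ((1 - σ) * α / σ) = -L := by
        rw [hLdef, Real.log_div (mul_pos (by linarith : (0:ℝ) < 1 - σ) hα0).ne' hσ0.ne', Real.log_mul (by linarith) hα0.ne',
          Real.log_div hσ0.ne' (by linarith : (1:ℝ) - σ ≠ 0), Real.log_div one_ne_zero hα0.ne',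
          Real.log_one]
        ring
      calc Real.log ((y0 - ε + δ) / (y + δ)) * J ≤ (-(ε / (1 + ε + δ))) * J :=
            mul_le_mul_of_nonneg_right hlogr hJ0.le
        _ = -(J * (ε / (1 + ε + δ))) := by ring
        _ ≤ -L := neg_le_neg hJL
        _ = Real.log ((1 - σ) * α / σ) := hLlog.symm
    have hkey : σ * ch ≤ (1 - σ) * (α * cl) := by
      have hch_eq : ch = ((y0 - ε + δ) / (y + δ)) ^ J * cl := by
        rw [hchdef, hcldef, Real.div_rpow hbch.le hbcl.le]
        field_simp
      rw [hch_eq]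
      have h1 : ((y0 - ε + δ) / (y + δ)) ^ J * cl ≤ ((1 - σ) * α / σ) * cl :=
        mul_le_mul_of_nonneg_right hrpow hclpos.le
      have h2 : σ * (((1 - σ) * α / σ) * cl) = (1 - σ) * (α * cl) := by
        field_simp
      nlinarith
    -- conclude
    rw [hfg _ hAΘ, hfg Θ subset_rfl, ← hIAdef, ← hITdef, ge_iff_le, le_div_iff₀ hIT_pos]
    -- goal : σ * IT ≤ IA
    have hfinal : σ * IB ≤ (1 - σ) * IA := by
      calc σ * IB ≤ σ * (ch * M) := mul_le_mul_of_nonneg_left hIB_ub hσ0.le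
        _ = (σ * ch) * M := by ring
        _ ≤ ((1 - σ) * (α * cl)) * M := mul_le_mul_of_nonneg_right hkey hMpos.le
        _ = (1 - σ) * (cl * (α * M)) := by ring
        _ ≤ (1 - σ) * IA := mul_le_mul_of_nonneg_left hIA_lb (by linarith)
    nlinarith [hsub, hfinal, hσ0, hσ1]
end

section
/- Let p(θ; J, δ) := (U(θ)+δ)^J / ∫_Θ (U(θ')+δ)^J dλ(θ'). Then for all J ≥ Ĵ ≥ 0 and δ > 0, p(θ; J, δ) ≤ ((1+δ)/δ)^{J−Ĵ} · p(θ; Ĵ, δ) for all θ ∈ Θ. -/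
open MeasureTheory Real

theorem density_ratio_bound
    (n : ℕ) (Θ : Set (EuclideanSpace ℝ (Fin n)))
    (hΘpos : 0 < volume Θ) (hΘfin : volume Θ < ⊤)
    (U : EuclideanSpace ℝ (Fin n) → ℝ) (hUmeas : Measurable U)
    (hU01 : ∀ θ ∈ Θ, U θ ∈ Set.Icc (0 : ℝ) 1)
    (J Jhat δ : ℝ) (hJ : J ≥ Jhat) (hJhat : Jhat ≥ 0) (hδ : 0 < δ) :
    ∀ θ ∈ Θ,
      (U θ + δ) ^ J / (∫ θ' in Θ, (U θ' + δ) ^ J ∂volume) ≤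
        ((1 + δ) / δ) ^ (J - Jhat) *
          ((U θ + δ) ^ Jhat / (∫ θ' in Θ, (U θ' + δ) ^ Jhat ∂volume)) := by
  intro θ hθ
  set μ := volume.restrict Θ with hμ
  set e := J - Jhat with he
  have he0 : 0 ≤ e := sub_nonneg.mpr hJ
  have hJ0 : 0 ≤ J := le_trans hJhat hJ
  have h1δ : (0:ℝ) < 1 + δ := by linarith
  -- a.e. w.r.t. μ, U ∈ [0,1]
  have hU_ae : ∀ᵐ x ∂μ, U x ∈ Set.Icc (0 : ℝ) 1 := by
    rw [ae_iff, hμ]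
    have hm : MeasurableSet {x | ¬ U x ∈ Set.Icc (0 : ℝ) 1} := by
      have : MeasurableSet {x | U x ∈ Set.Icc (0 : ℝ) 1} :=
        hUmeas measurableSet_Icc
      exact this.compl
    rw [Measure.restrict_apply hm]
    have : {x | ¬ U x ∈ Set.Icc (0 : ℝ) 1} ∩ Θ = ∅ := by
      ext x
      simp only [Set.mem_inter_iff, Set.mem_setOf_eq, Set.mem_empty_iff_false,
        iff_false, not_and]
      intro hx hxΘ
      exact hx (hU01 x hxΘ)
    rw [this, measure_empty]
  haveI : IsFiniteMeasure μ := by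
    refine ⟨?_⟩
    rw [hμ, Measure.restrict_apply_univ]
    exact hΘfin
  have hmeas : ∀ c : ℝ, Measurable fun x => (U x + δ) ^ c := fun c =>
    (hUmeas.add_const δ).pow measurable_const
  -- integrability
  have hint : ∀ c : ℝ, 0 ≤ c → Integrable (fun x => (U x + δ) ^ c) μ := by
    intro c hc
    refine Integrable.mono' (integrable_const ((1 + δ) ^ c))
      (hmeas c).aestronglyMeasurable ?_
    filter_upwards [hU_ae] with x hx
    rw [Real.norm_eq_abs, abs_of_nonneg (Real.rpow_nonneg (by linarith [hx.1]) c)]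
    exact Real.rpow_le_rpow (by linarith [hx.1]) (by linarith [hx.2]) hc
  -- lower bounds for integrals
  have hlow : ∀ c : ℝ, 0 ≤ c →
      δ ^ c * (volume Θ).toReal ≤ ∫ x, (U x + δ) ^ c ∂μ := by
    intro c hc
    have : ∫ _x, δ ^ c ∂μ ≤ ∫ x, (U x + δ) ^ c ∂μ := by
      refine integral_mono_ae (integrable_const _) (hint c hc) ?_
      filter_upwards [hU_ae] with x hx
      exact Real.rpow_le_rpow hδ.le (by linarith [hx.1]) hc
    rwa [integral_const, hμ, Measure.real, Measure.restrict_apply_univ, smul_eq_mul,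
      mul_comm] at this
  have hvolpos : 0 < (volume Θ).toReal := ENNReal.toReal_pos hΘpos.ne' hΘfin.ne
  have hIpos : ∀ c : ℝ, 0 ≤ c → 0 < ∫ x, (U x + δ) ^ c ∂μ := by
    intro c hc
    exact lt_of_lt_of_le (mul_pos (Real.rpow_pos_of_pos hδ c) hvolpos) (hlow c hc)
  -- key integral inequality
  have hBint : δ ^ e * (∫ x, (U x + δ) ^ Jhat ∂μ) ≤ ∫ x, (U x + δ) ^ J ∂μ := by
    rw [← integral_const_mul]
    refine integral_mono_ae ((hint Jhat hJhat).const_mul _) (hint J hJ0) ?_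
    filter_upwards [hU_ae] with x hx
    have hxpos : 0 < U x + δ := by linarith [hx.1]
    calc δ ^ e * (U x + δ) ^ Jhat ≤ (U x + δ) ^ e * (U x + δ) ^ Jhat :=
          mul_le_mul_of_nonneg_right
            (Real.rpow_le_rpow hδ.le (by linarith [hx.1]) he0)
            (Real.rpow_nonneg hxpos.le _)
      _ = (U x + δ) ^ J := by rw [← Real.rpow_add hxpos]; congr 1; ring
  -- key numerator inequality
  have hθ0 : 0 ≤ U θ := (hU01 θ hθ).1
  have hθ1 : U θ ≤ 1 := (hU01 θ hθ).2
  have hθpos : 0 < U θ + δ := by linarith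
  have hAnum : (U θ + δ) ^ J ≤ (1 + δ) ^ e * (U θ + δ) ^ Jhat := by
    have heq : (U θ + δ) ^ J = (U θ + δ) ^ e * (U θ + δ) ^ Jhat := by
      rw [← Real.rpow_add hθpos]; congr 1; ring
    rw [heq]
    exact mul_le_mul_of_nonneg_right
      (Real.rpow_le_rpow hθpos.le (by linarith) he0)
      (Real.rpow_nonneg hθpos.le _)
  -- conclude
  have hdpos : 0 < δ ^ e * ∫ x, (U x + δ) ^ Jhat ∂μ :=
    mul_pos (Real.rpow_pos_of_pos hδ e) (hIpos Jhat hJhat)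
  have key : (U θ + δ) ^ J / (∫ x, (U x + δ) ^ J ∂μ) ≤
      ((1 + δ) ^ e * (U θ + δ) ^ Jhat) / (δ ^ e * ∫ x, (U x + δ) ^ Jhat ∂μ) :=
    div_le_div₀ (by positivity) hAnum hdpos hBint
  refine key.trans_eq ?_
  rw [Real.div_rpow (by linarith) hδ.le]
  field_simp
end

section
/- With y_ᾱ the (1−ᾱ)-quantile of U_δ under π_δ, the sets A_ᾱ := {U_δ < y_ᾱ} and Ā_ᾱ := {U_δ ≥ y_ᾱ} satisfy λ(Ā_ᾱ) > 0 and λ(A_ᾱ)/λ(Ā_ᾱ) ≤ ((1−ᾱ)/ᾱ)·((1+δ)/δ). -/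
open MeasureTheory Real

theorem quantile_measure_ratio_bound
    (n : ℕ) (Θ : Set (EuclideanSpace ℝ (Fin n)))
    (hΘpos : 0 < volume Θ) (hΘfin : volume Θ < ⊤)
    (U : EuclideanSpace ℝ (Fin n) → ℝ) (hUmeas : Measurable U)
    (hU01 : ∀ θ ∈ Θ, U θ ∈ Set.Icc (0 : ℝ) 1)
    (δ abar : ℝ) (hδ : 0 < δ) (habar : abar ∈ Set.Ioc (0 : ℝ) 1) :
    let piδ : Set (EuclideanSpace ℝ (Fin n)) → ℝ := fun A =>
      (∫ θ in A, (U θ + δ) ∂volume) / (∫ θ in Θ, (U θ + δ) ∂volume)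
    let ybar : ℝ := sInf {y : ℝ | piδ {θ ∈ Θ | U θ + δ ≤ y} ≥ 1 - abar}
    0 < volume {θ ∈ Θ | U θ + δ ≥ ybar} ∧
      (volume {θ ∈ Θ | U θ + δ < ybar}).toReal /
          (volume {θ ∈ Θ | U θ + δ ≥ ybar}).toReal ≤
        ((1 - abar) / abar) * ((1 + δ) / δ) := by
  intro piδ ybar
  classical
  obtain ⟨habar0, habar1⟩ := habar
  set f : EuclideanSpace ℝ (Fin n) → ℝ := fun θ => U θ + δ with hf_def
  have hfmeas : Measurable f := hUmeas.add_const δ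
  set μ : Measure (EuclideanSpace ℝ (Fin n)) := volume.restrict Θ with hμ_def
  have hμuniv : μ Set.univ = volume Θ := Measure.restrict_apply_univ Θ
  haveI : IsFiniteMeasure μ := ⟨by rw [hμuniv]; exact hΘfin⟩
  -- the bad set is null
  have hbadmeas : MeasurableSet {x | ¬ (δ ≤ f x ∧ f x ≤ 1 + δ)} :=
    ((measurableSet_le measurable_const hfmeas).inter
      (measurableSet_le hfmeas measurable_const)).compl
  have hbadnull : μ {x | ¬ (δ ≤ f x ∧ f x ≤ 1 + δ)} = 0 := by
    rw [hμ_def, Measure.restrict_apply hbadmeas]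
    have hempty : {x | ¬ (δ ≤ f x ∧ f x ≤ 1 + δ)} ∩ Θ = ∅ := by
      rw [Set.eq_empty_iff_forall_notMem]
      rintro θ ⟨hbad, hθ⟩
      obtain ⟨h0, h1⟩ := hU01 θ hθ
      exact hbad ⟨show δ ≤ U θ + δ by linarith, show U θ + δ ≤ 1 + δ by linarith⟩
    rw [hempty]; exact measure_empty
  have hae : ∀ᵐ x ∂μ, δ ≤ f x ∧ f x ≤ 1 + δ := by
    rw [ae_iff]; exact hbadnull
  have hfint : Integrable f μ :=
    ⟨hfmeas.aestronglyMeasurable, HasFiniteIntegral.of_bounded (C := 1 + δ)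
      (hae.mono fun x hx => by
        rw [Real.norm_eq_abs, abs_le]; constructor <;> linarith [hx.1, hx.2])⟩
  set I : ℝ := ∫ x, f x ∂μ with hI_def
  set M : ℝ := (volume Θ).toReal with hM_def
  have hM : 0 < M := ENNReal.toReal_pos hΘpos.ne' hΘfin.ne
  have hI_ge : δ * M ≤ I := by
    have h := integral_mono_ae (integrable_const δ) hfint (hae.mono fun x h => h.1)
    rw [integral_const, measureReal_def, hμuniv, smul_eq_mul] at h
    linarith [h]
  have hI_pos : 0 < I := lt_of_lt_of_le (by positivity) hI_ge
  -- relate piδ to integrals w.r.t. μ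
  have hrestrict : ∀ y : ℝ, volume.restrict {θ ∈ Θ | U θ + δ ≤ y}
      = μ.restrict {x | f x ≤ y} := by
    intro y
    rw [hμ_def, Measure.restrict_restrict (measurableSet_le hfmeas measurable_const)]
    congr 1
    ext x
    exact and_comm
  have hpi : ∀ y : ℝ, piδ {θ ∈ Θ | U θ + δ ≤ y} = (∫ x in {x | f x ≤ y}, f x ∂μ) / I := by
    intro y
    show (∫ θ in {θ ∈ Θ | U θ + δ ≤ y}, (U θ + δ) ∂volume)
        / (∫ θ in Θ, (U θ + δ) ∂volume) = _
    rw [hrestrict y]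
  have hybar : ybar = sInf {y : ℝ | piδ {θ ∈ Θ | U θ + δ ≤ y} ≥ 1 - abar} := rfl
  -- measures of the two target sets
  have hvlt : volume {θ ∈ Θ | U θ + δ < ybar} = μ {x | f x < ybar} := by
    rw [hμ_def, Measure.restrict_apply (measurableSet_lt hfmeas measurable_const)]
    congr 1
    ext x
    exact and_comm.symm
  have hvge : volume {θ ∈ Θ | U θ + δ ≥ ybar} = μ {x | ybar ≤ f x} := by
    rw [hμ_def, Measure.restrict_apply (measurableSet_le measurable_const hfmeas)]
    congr 1
    ext x
    exact and_comm.symm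
  clear_value piδ ybar f μ I M
  rcases eq_or_lt_of_le habar1 with h1 | h1
  · -- abar = 1 : ybar = 0
    have hQuniv : {y : ℝ | piδ {θ ∈ Θ | U θ + δ ≤ y} ≥ 1 - abar} = Set.univ := by
      ext y
      simp only [Set.mem_setOf_eq, Set.mem_univ, iff_true, hpi y, h1, sub_self, ge_iff_le]
      apply div_nonneg _ hI_pos.le
      exact setIntegral_nonneg_of_ae (hae.mono fun x hx => by
        simp only [Pi.zero_apply]; linarith [hx.1])
    have hy0 : ybar = 0 := by
      rw [hybar, hQuniv]
      apply Real.sInf_of_not_bddBelow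
      rintro ⟨x, hx⟩
      have := hx (Set.mem_univ (x - 1))
      linarith
    have hAb : {θ ∈ Θ | U θ + δ ≥ ybar} = Θ := by
      ext θ
      simp only [Set.mem_setOf_eq, hy0, ge_iff_le, and_iff_left_iff_imp]
      intro hθ
      linarith [(hU01 θ hθ).1]
    have hA : {θ ∈ Θ | U θ + δ < ybar} = ∅ := by
      ext θ
      simp only [Set.mem_setOf_eq, hy0, Set.mem_empty_iff_false, iff_false, not_and, not_lt]
      intro hθ
      linarith [(hU01 θ hθ).1]
    refine ⟨by rw [hAb]; exact hΘpos, ?_⟩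
    rw [hA, h1]
    norm_num
  · -- abar < 1
    set Q : Set ℝ := {y : ℝ | piδ {θ ∈ Θ | U θ + δ ≤ y} ≥ 1 - abar} with hQ_def
    clear_value Q
    have hQmem_iff : ∀ y : ℝ, y ∈ Q ↔ 1 - abar ≤ (∫ x in {x | f x ≤ y}, f x ∂μ) / I := by
      intro y
      rw [hQ_def, Set.mem_setOf_eq, hpi y]
    -- 1 + δ ∈ Q
    have hcompl_null : μ {x | f x ≤ 1 + δ}ᶜ = 0 := by
      apply measure_mono_null _ hbadnull
      intro x hx
      simp only [Set.mem_compl_iff, Set.mem_setOf_eq, not_le] at hx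
      simp only [Set.mem_setOf_eq, not_and, not_le]
      intro _
      exact hx
    have hF1 : (∫ x in {x | f x ≤ 1 + δ}, f x ∂μ) = I := by
      have hz : (∫ x in {x | f x ≤ 1 + δ}ᶜ, f x ∂μ) = 0 := by
        rw [Measure.restrict_eq_zero.mpr hcompl_null, integral_zero_measure]
      have hsplit : (∫ x in {x | f x ≤ 1 + δ}, f x ∂μ)
          + (∫ x in {x | f x ≤ 1 + δ}ᶜ, f x ∂μ) = I := by
        rw [hI_def]
        exact integral_add_compl (measurableSet_le hfmeas measurable_const) hfint
      linarith
    have hQmem : (1 + δ) ∈ Q := by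
      rw [hQmem_iff, hF1, div_self hI_pos.ne']
      linarith
    have hQlb : ∀ y ∈ Q, δ ≤ y := by
      intro y hy
      by_contra hlt
      push_neg at hlt
      have hnull : μ {x | f x ≤ y} = 0 := by
        apply measure_mono_null _ hbadnull
        intro x hx
        simp only [Set.mem_setOf_eq] at hx ⊢
        intro hc
        linarith [hc.1]
      have hF0 : (∫ x in {x | f x ≤ y}, f x ∂μ) = 0 := by
        rw [Measure.restrict_eq_zero.mpr hnull, integral_zero_measure]
      rw [hQmem_iff, hF0, zero_div] at hy
      linarith
    have hQbdd : BddBelow Q := ⟨δ, hQlb⟩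
    have hybar_le : ybar ≤ 1 + δ := by rw [hybar]; exact csInf_le hQbdd hQmem
    have hybar_ge : δ ≤ ybar := by rw [hybar]; exact le_csInf ⟨_, hQmem⟩ hQlb
    -- values below ybar are not in Q
    have hnotQ : ∀ y : ℝ, y < ybar → (∫ x in {x | f x ≤ y}, f x ∂μ) < (1 - abar) * I := by
      intro y hy
      rw [hybar] at hy
      have : y ∉ Q := fun hmem => absurd (csInf_le hQbdd hmem) (not_le.mpr hy)
      rw [hQmem_iff] at this
      push_neg at this
      rw [div_lt_iff₀ hI_pos] at this
      linarith [this]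
    -- limit argument: ∫ over {f < ybar} ≤ (1-abar) I
    set A : ℝ := ∫ x in {x | f x < ybar}, f x ∂μ with hA_def
    clear_value A
    have hA_le : A ≤ (1 - abar) * I := by
      set s : ℕ → Set (EuclideanSpace ℝ (Fin n)) :=
        fun k => {x | f x ≤ ybar - 1 / ((k : ℝ) + 1)} with hs_def
      clear_value s
      have hsmeas : ∀ k, MeasurableSet (s k) := by
        intro k
        simp only [hs_def]
        exact measurableSet_le hfmeas measurable_const
      have hsmono : Monotone s := by
        intro k m hkm x hx
        simp only [hs_def, Set.mem_setOf_eq] at hx ⊢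
        have hcast : ((k : ℝ) + 1) ≤ ((m : ℝ) + 1) := by
          have := (Nat.cast_le (α := ℝ)).mpr hkm
          linarith
        have h1k : 1 / ((m : ℝ) + 1) ≤ 1 / ((k : ℝ) + 1) :=
          one_div_le_one_div_of_le (by positivity) hcast
        linarith
      have hsunion : (⋃ k, s k) = {x | f x < ybar} := by
        ext x
        simp only [hs_def, Set.mem_iUnion, Set.mem_setOf_eq]
        constructor
        · rintro ⟨k, hk⟩
          have : (0:ℝ) < 1 / ((k:ℝ) + 1) := by positivity
          linarith
        · intro hx
          obtain ⟨k, hk⟩ := exists_nat_one_div_lt (show (0:ℝ) < ybar - f x by linarith)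
          exact ⟨k, by linarith⟩
      have htend := tendsto_setIntegral_of_monotone hsmeas hsmono
        (hfint.integrableOn (s := ⋃ k, s k))
      rw [hsunion, ← hA_def] at htend
      refine le_of_tendsto htend (Filter.Eventually.of_forall fun k => ?_)
      simp only [hs_def]
      apply le_of_lt
      apply hnotQ
      have : (0:ℝ) < 1 / ((k:ℝ) + 1) := by positivity
      linarith
    have hcompl : {x | f x < ybar}ᶜ = {x | ybar ≤ f x} := by
      ext x; simp [not_lt]
    have hsplit : A + (∫ x in {x | ybar ≤ f x}, f x ∂μ) = I := by
      rw [hA_def, hI_def, ← hcompl]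
      exact integral_add_compl (measurableSet_lt hfmeas measurable_const) hfint
    have hB_ge : abar * I ≤ ∫ x in {x | ybar ≤ f x}, f x ∂μ := by linarith
    set a : ℝ := (μ {x | f x < ybar}).toReal with ha_def
    clear_value a
    set b : ℝ := (μ {x | ybar ≤ f x}).toReal with hb_def
    clear_value b
    have ha_nonneg : 0 ≤ a := by rw [ha_def]; exact ENNReal.toReal_nonneg
    have hb_nonneg : 0 ≤ b := by rw [hb_def]; exact ENNReal.toReal_nonneg
    have hδa : δ * a ≤ A := by
      have h := integral_mono_ae (μ := μ.restrict {x | f x < ybar})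
        (integrable_const δ) hfint.integrableOn
        (ae_restrict_of_ae (hae.mono fun x h => h.1))
      rw [integral_const, measureReal_restrict_apply_univ, measureReal_def, smul_eq_mul] at h
      rw [ha_def]; linarith [h]
    have hbδ : (∫ x in {x | ybar ≤ f x}, f x ∂μ) ≤ (1 + δ) * b := by
      have h := integral_mono_ae (μ := μ.restrict {x | ybar ≤ f x})
        hfint.integrableOn (integrable_const (1 + δ))
        (ae_restrict_of_ae (hae.mono fun x h => h.2))
      rw [integral_const, measureReal_restrict_apply_univ, measureReal_def, smul_eq_mul] at h
      rw [hb_def]; linarith [h]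
    have hb_pos : 0 < b := by nlinarith
    have hfin : μ {x | ybar ≤ f x} < ⊤ :=
      lt_of_le_of_lt (measure_mono (Set.subset_univ _)) (by rw [hμuniv]; exact hΘfin)
    constructor
    · rw [hvge]
      rcases eq_or_lt_of_le (zero_le (a := μ {x | ybar ≤ f x})) with hz | hz
      · exfalso
        rw [hb_def, ← hz] at hb_pos
        simp at hb_pos
      · exact hz
    · rw [hvlt, hvge, ← ha_def, ← hb_def, div_le_iff₀ hb_pos,
        show ((1 - abar) / abar) * ((1 + δ) / δ) * b = ((1 - abar) * (1 + δ) * b) / (abar * δ) by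
          first
          | (field_simp; ring)
          | field_simp,
        le_div_iff₀ (by positivity)]
      nlinarith [mul_le_mul_of_nonneg_left hB_ge (by linarith : (0:ℝ) ≤ 1 - abar),
        mul_le_mul_of_nonneg_left hbδ (by linarith : (0:ℝ) ≤ 1 - abar),
        mul_le_mul_of_nonneg_left hδa habar0.le,
        mul_le_mul_of_nonneg_left hA_le habar0.le]
end

section
/- Let ρ ∈ (0,1], δ > 0, ε̃ := (ρ⁻¹ − 1)(1+δ), and α̃ := ((1+δ)/(ε̃+δ))·ᾱ. If θ ∈ Θ satisfies π_δ({θ' : ρ(U(θ')+δ) > U(θ)+δ}) ≤ ᾱ, then λ({θ' ∈ Θ : U(θ') > U(θ)+ε̃}) ≤ α̃·λ(Θ); i.e., θ is an approximate domain optimizer with value imprecision ε̃ and residual domain α̃. -/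
open MeasureTheory Real

theorem quantile_condition_implies_domain_opt
    (n : ℕ) (Θ : Set (EuclideanSpace ℝ (Fin n)))
    (hΘpos : 0 < volume Θ) (hΘfin : volume Θ < ⊤)
    (U : EuclideanSpace ℝ (Fin n) → ℝ) (hUmeas : Measurable U)
    (hU01 : ∀ θ ∈ Θ, U θ ∈ Set.Icc (0 : ℝ) 1)
    (δ abar ρ : ℝ) (hδ : 0 < δ) (habar : abar ∈ Set.Ioc (0 : ℝ) 1)
    (hρ : ρ ∈ Set.Ioc (0 : ℝ) 1)
    (θ : EuclideanSpace ℝ (Fin n)) (hθ : θ ∈ Θ)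
    (hcond : (∫ θ' in {θ' ∈ Θ | ρ * (U θ' + δ) > U θ + δ}, (U θ' + δ) ∂volume) /
        (∫ θ' in Θ, (U θ' + δ) ∂volume) ≤ abar) :
    volume {θ' ∈ Θ | U θ' > U θ + (ρ⁻¹ - 1) * (1 + δ)} ≤
      ENNReal.ofReal (((1 + δ) / ((ρ⁻¹ - 1) * (1 + δ) + δ)) * abar) * volume Θ := by
  obtain ⟨hρ0, hρ1⟩ := hρ
  obtain ⟨habar0, habar1⟩ := habar
  have hinv : 1 ≤ ρ⁻¹ := one_le_inv_iff₀.mpr ⟨hρ0, hρ1⟩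
  set ε := (ρ⁻¹ - 1) * (1 + δ) with hεdef
  have hεnn : 0 ≤ ε := mul_nonneg (by linarith) (by linarith)
  have hUθ := hU01 θ hθ
  set μ := volume.restrict Θ with hμdef
  haveI : IsFiniteMeasure μ := ⟨by rw [hμdef, Measure.restrict_apply_univ]; exact hΘfin⟩
  have hfmeas : Measurable (fun x => U x + δ) := hUmeas.add_const δ
  have haeU : ∀ᵐ x ∂μ, U x ∈ Set.Icc (0:ℝ) 1 := by
    have hm : MeasurableSet {a | U a ∉ Set.Icc (0:ℝ) 1} :=
      (hUmeas measurableSet_Icc).compl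
    rw [ae_iff, hμdef, Measure.restrict_apply hm]
    have : {a | U a ∉ Set.Icc (0:ℝ) 1} ∩ Θ = ∅ :=
      Set.eq_empty_iff_forall_notMem.mpr (fun x hx => hx.1 (hU01 x hx.2))
    rw [this]; exact measure_empty
  have hint : Integrable (fun x => U x + δ) μ := by
    refine Integrable.mono' (integrable_const (1 + δ)) hfmeas.aestronglyMeasurable ?_
    exact haeU.mono fun x hx => by
      rw [Real.norm_eq_abs, abs_le]; constructor <;> [linarith [hx.1]; linarith [hx.2]]
  set S := {x | U θ + ε < U x} with hSdef
  set S' := {x | U θ + δ < ρ * (U x + δ)} with hS'def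
  have hSm : MeasurableSet S := measurableSet_lt measurable_const hUmeas
  have hS'm : MeasurableSet S' :=
    measurableSet_lt measurable_const ((hUmeas.add_const δ).const_mul ρ)
  have hsub : S ⊆ S' := by
    intro x hx
    simp only [hSdef, hS'def, Set.mem_setOf_eq] at hx ⊢
    rw [hεdef] at hx
    have hstep : 0 < U x + δ - ρ⁻¹ * (U θ + δ) := by
      nlinarith [mul_nonneg (sub_nonneg.mpr hinv) (sub_nonneg.mpr hUθ.2)]
    have hmul := mul_pos hρ0 hstep
    have hcancel : ρ * (ρ⁻¹ * (U θ + δ)) = U θ + δ := by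
      field_simp
    nlinarith [hmul, hcancel]
  have hvolS : volume {θ' ∈ Θ | U θ' > U θ + ε} = μ S := by
    rw [hμdef, Measure.restrict_apply hSm]
    congr 1
    ext x
    simp only [hSdef, Set.mem_setOf_eq, Set.mem_inter_iff, gt_iff_lt, Set.mem_sep_iff]
    tauto
  have h1 : (ε + δ) * (μ S).toReal ≤ ∫ x in S, (U x + δ) ∂μ := by
    refine setIntegral_ge_of_const_le_real hSm (measure_ne_top μ S) ?_ hint.integrableOn
    intro x hx
    simp only [hSdef, Set.mem_setOf_eq] at hx
    linarith [hUθ.1]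
  have h2 : ∫ x in S, (U x + δ) ∂μ ≤ ∫ x in S', (U x + δ) ∂μ := by
    refine setIntegral_mono_set hint.integrableOn ?_ (Filter.Eventually.of_forall hsub)
    exact (ae_mono Measure.restrict_le_self) (haeU.mono fun x hx => by
      show (0:ℝ) ≤ U x + δ; linarith [hx.1])
  have h3 : ∫ x in S', (U x + δ) ∂μ
      = ∫ θ' in {θ' ∈ Θ | ρ * (U θ' + δ) > U θ + δ}, (U θ' + δ) ∂volume := by
    have hsets : S' ∩ Θ = {θ' ∈ Θ | ρ * (U θ' + δ) > U θ + δ} := by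
      ext x
      simp only [hS'def, Set.mem_setOf_eq, Set.mem_inter_iff, gt_iff_lt, Set.mem_sep_iff]
      tauto
    rw [hμdef, Measure.restrict_restrict hS'm, hsets]
  have hden_eq : ∫ θ' in Θ, (U θ' + δ) ∂volume = ∫ x, (U x + δ) ∂μ := rfl
  have hμuniv : (μ Set.univ).toReal = (volume Θ).toReal := by
    rw [hμdef, Measure.restrict_apply_univ]
  have hMpos : 0 < (volume Θ).toReal := ENNReal.toReal_pos (ne_of_gt hΘpos) (ne_of_lt hΘfin)
  have hden_pos : 0 < ∫ x, (U x + δ) ∂μ := by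
    have : δ * (volume Θ).toReal ≤ ∫ x, (U x + δ) ∂μ := by
      have := integral_mono_ae (integrable_const δ) hint
        (haeU.mono fun x hx => by show δ ≤ U x + δ; linarith [hx.1])
      simpa [integral_const, Measure.real, hμuniv, mul_comm] using this
    nlinarith
  have hden_ub : ∫ x, (U x + δ) ∂μ ≤ (1 + δ) * (volume Θ).toReal := by
    have := integral_mono_ae hint (integrable_const (1 + δ))
      (haeU.mono fun x hx => by show U x + δ ≤ 1 + δ; linarith [hx.2])
    simpa [integral_const, Measure.real, hμuniv, mul_comm] using this
  have hnum : ∫ θ' in {θ' ∈ Θ | ρ * (U θ' + δ) > U θ + δ}, (U θ' + δ) ∂volume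
      ≤ abar * ∫ x, (U x + δ) ∂μ := by
    rw [← hden_eq]
    rw [hden_eq] at hcond ⊢
    rw [div_le_iff₀ hden_pos] at hcond
    rw [hden_eq] at hcond
    exact hcond
  have hkey : (ε + δ) * (μ S).toReal ≤ abar * ((1 + δ) * (volume Θ).toReal) := by
    calc (ε + δ) * (μ S).toReal ≤ ∫ x in S', (U x + δ) ∂μ := le_trans h1 h2
    _ ≤ abar * ∫ x, (U x + δ) ∂μ := by rw [h3]; exact hnum
    _ ≤ abar * ((1 + δ) * (volume Θ).toReal) := by
        exact mul_le_mul_of_nonneg_left hden_ub (le_of_lt habar0)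
  have hεδ : 0 < ε + δ := by linarith
  have hm : (μ S).toReal ≤ ((1 + δ) / (ε + δ) * abar) * (volume Θ).toReal := by
    rw [div_mul_eq_mul_div, div_mul_eq_mul_div, le_div_iff₀ hεδ]
    nlinarith
  have hc : 0 ≤ (1 + δ) / (ε + δ) * abar :=
    mul_nonneg (div_nonneg (by linarith) (le_of_lt hεδ)) (le_of_lt habar0)
  rw [hvolS]
  calc μ S = ENNReal.ofReal ((μ S).toReal) := (ENNReal.ofReal_toReal (measure_ne_top μ S)).symm
  _ ≤ ENNReal.ofReal (((1 + δ) / (ε + δ) * abar) * (volume Θ).toReal) :=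
      ENNReal.ofReal_le_ofReal hm
  _ = ENNReal.ofReal ((1 + δ) / (ε + δ) * abar) * ENNReal.ofReal ((volume Θ).toReal) :=
      ENNReal.ofReal_mul hc
  _ = ENNReal.ofReal ((1 + δ) / (ε + δ) * abar) * volume Θ := by
      rw [ENNReal.ofReal_toReal (ne_of_lt hΘfin)]
end
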